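/- arXiv:1902.08839 — 2 statements merged into one kernel-verified Lean document; each statement's English description precedes it below -/
import Mathlib

section
/- Let ȳ ∈ (0,∞] and let m be a minitive monotone measure on (X,𝒜), i.e., m(C∩D) = min(m(C), m(D)) for all C,D ∈ 𝒜. Let ⋆ : [0,ȳ]² → [0,ȳ] be nondecreasing and left-continuous with a ⋆ b ≤ min(a,b) for all a,b. Let φᵢ : [0,ȳ] → [0,ȳ] be increasing and right-continuous and ψᵢ : [0,φᵢ(ȳ)] → [0,ȳ] be nondecreasing and left-continuous for i=1,2,3, with φ₁(ȳ) = φ₂(ȳ) = φ₃(ȳ), ψ₁ ≥ ψ₂ and ψ₁ ≥ ψ₃ pointwise, and ψⱼ(φⱼ(x)) ≤ x ≤ ψ₁(φ₁(x)) for all x ∈ [0,ȳ] and j=2,3. Then the Chebyshev type inequality ψ₁(I_{∧,A∩B}(φ₁(f⋆g))) ≥ ψ₂(I_{∧,A}(φ₂(f))) ⋆ ψ₃(I_{∧,B}(φ₃(g))) holds for all A,B ∈ 𝒜 and all f,g ∈ F^ȳ. -/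
open Set ENNReal

noncomputable def uSugeno {X : Type*} (ybar : ℝ≥0∞) (op : ℝ≥0∞ → ℝ≥0∞ → ℝ≥0∞)
    (m : Set X → ℝ≥0∞) (D : Set X) (f : X → ℝ≥0∞) : ℝ≥0∞ :=
  ⨆ t ∈ Set.Iic ybar, op t (m (D ∩ {x | t ≤ f x}))

noncomputable def qInt {X : Type*} (oti : ℝ≥0∞ → ℝ≥0∞ → ℝ≥0∞)
    (m : Set X → ℝ≥0∞) (f : X → ℝ≥0∞) : ℝ≥0∞ :=
  ⨆ t ∈ Set.Iic (1 : ℝ≥0∞), oti (m {x | t ≤ f x}) t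

def Mono2On (op : ℝ≥0∞ → ℝ≥0∞ → ℝ≥0∞) (s t : Set ℝ≥0∞) : Prop :=
  ∀ ⦃a₁⦄, a₁ ∈ s → ∀ ⦃b₁⦄, b₁ ∈ t → ∀ ⦃a₂⦄, a₂ ∈ s → ∀ ⦃b₂⦄, b₂ ∈ t →
    a₁ ≤ a₂ → b₁ ≤ b₂ → op a₁ b₁ ≤ op a₂ b₂

def LeftContOn (g : ℝ≥0∞ → ℝ≥0∞) (s : Set ℝ≥0∞) : Prop :=
  ∀ x ∈ s, ContinuousWithinAt g (Set.Iic x) x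

def RightContOn (g : ℝ≥0∞ → ℝ≥0∞) (s : Set ℝ≥0∞) : Prop :=
  ∀ x ∈ s, ContinuousWithinAt g (Set.Ici x) x

def LeftCont2On (op : ℝ≥0∞ → ℝ≥0∞ → ℝ≥0∞) (s t : Set ℝ≥0∞) : Prop :=
  (∀ b ∈ t, ∀ a ∈ s, ContinuousWithinAt (fun x => op x b) (Set.Iic a) a) ∧
  (∀ a ∈ s, ∀ b ∈ t, ContinuousWithinAt (fun y => op a y) (Set.Iic b) b)

def mRange {X : Type*} [MeasurableSpace X] (m : Set X → ℝ≥0∞) : Set ℝ≥0∞ :=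
  {c | ∃ A : Set X, MeasurableSet A ∧ m A = c}

def MonotoneMeasure {X : Type*} [MeasurableSpace X] (m : Set X → ℝ≥0∞) : Prop :=
  m ∅ = 0 ∧ 0 < m Set.univ ∧
    ∀ ⦃A B : Set X⦄, MeasurableSet A → MeasurableSet B → A ⊆ B → m A ≤ m B

def IsCapacity {X : Type*} [MeasurableSpace X] (m : Set X → ℝ≥0∞) : Prop :=
  m ∅ = 0 ∧ m Set.univ = 1 ∧
    ∀ ⦃A B : Set X⦄, MeasurableSet A → MeasurableSet B → A ⊆ B → m A ≤ m B

def ComonotoneOn {X : Type*} (D : Set X) (f g : X → ℝ≥0∞) : Prop :=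
  ∀ x ∈ D, ∀ y ∈ D, f x < f y → g x ≤ g y

def IsSemicopula (S : ℝ≥0∞ → ℝ≥0∞ → ℝ≥0∞) : Prop :=
  Mono2On S (Set.Iic 1) (Set.Iic 1) ∧
    ∀ a ∈ Set.Iic (1 : ℝ≥0∞), S a 1 = a ∧ S 1 a = a

def MPosDep {X : Type*} (m : Set X → ℝ≥0∞) (tri : ℝ≥0∞ → ℝ≥0∞ → ℝ≥0∞)
    (k : ℝ≥0∞) (A B : Set X) (f g : X → ℝ≥0∞) : Prop :=
  ∀ α ∈ Set.Iic k, ∀ β ∈ Set.Iic k,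
    tri (m (A ∩ {x | α ≤ f x})) (m (B ∩ {x | β ≤ g x})) ≤
      m (A ∩ B ∩ {x | α ≤ f x} ∩ {x | β ≤ g x})

/-- Pull back a level of a monotone, right-continuous function to a level of the argument. -/
lemma pullback_level (ybar : ℝ≥0∞) (φ : ℝ≥0∞ → ℝ≥0∞)
    (hmono : MonotoneOn φ (Set.Iic ybar)) (hrc : RightContOn φ (Set.Iic ybar))
    (t : ℝ≥0∞) (ht : t ≤ φ ybar) :
    ∃ c, c ≤ ybar ∧ t ≤ φ c ∧ ∀ y, y ≤ ybar → (t ≤ φ y ↔ c ≤ y) := by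
  set S : Set ℝ≥0∞ := {y | y ≤ ybar ∧ t ≤ φ y} with hS
  have hySmem : ybar ∈ S := ⟨le_rfl, ht⟩
  set c := sInf S with hc
  have hcy : c ≤ ybar := sInf_le hySmem
  have hcS : ∀ y ∈ S, c ≤ y := fun y hy => sInf_le hy
  have htc : t ≤ φ c := by
    by_contra hlt
    push_neg at hlt
    have hclos : c ∈ closure S := (isGLB_sInf S).mem_closure ⟨ybar, hySmem⟩
    have hne : (nhdsWithin c S).NeBot := mem_closure_iff_nhdsWithin_neBot.mp hclos
    have hcont : Filter.Tendsto φ (nhdsWithin c (Set.Ici c)) (nhds (φ c)) :=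
      hrc c (Set.mem_Iic.mpr hcy)
    have hev : φ ⁻¹' (Set.Iio t) ∈ nhdsWithin c (Set.Ici c) := hcont (Iio_mem_nhds hlt)
    have hev' : φ ⁻¹' (Set.Iio t) ∈ nhdsWithin c S :=
      nhdsWithin_mono c (fun y hy => hcS y hy) hev
    obtain ⟨y, hy1, hy2⟩ :=
      Filter.nonempty_of_mem (Filter.inter_mem hev' self_mem_nhdsWithin)
    exact absurd hy2.2 (not_le.mpr hy1)
  exact ⟨c, hcy, htc, fun y hy =>
    ⟨fun h => hcS y ⟨hy, h⟩, fun h => htc.trans (hmono (Set.mem_Iic.mpr hcy) (Set.mem_Iic.mpr hy) h)⟩⟩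

/-- A min-based Sugeno integral of a function bounded by `K` is at most `K`. -/
lemma uSugeno_min_le {X : Type*} (ybar K : ℝ≥0∞) (m : Set X → ℝ≥0∞)
    (hm0 : m ∅ = 0) (D : Set X) (h : X → ℝ≥0∞) (hh : ∀ x, h x ≤ K) :
    uSugeno ybar (fun a b => min a b) m D h ≤ K := by
  refine iSup₂_le fun t _ => ?_
  rcases le_or_gt t K with h1 | h1
  · exact (min_le_left _ _).trans h1
  · have hempty : {x | t ≤ h x} = ∅ := by
      ext x
      simp only [Set.mem_setOf_eq, Set.mem_empty_iff_false, iff_false, not_le]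
      exact (hh x).trans_lt h1
    rw [hempty, Set.inter_empty, hm0]
    simp

/-- Level sets of `star (f x) (g x)` are measurable, for `star` monotone and left-continuous. -/
lemma star_level_meas {X : Type*} [MeasurableSpace X]
    (ybar : ℝ≥0∞) (star : ℝ≥0∞ → ℝ≥0∞ → ℝ≥0∞)
    (hstar_mono : Mono2On star (Set.Iic ybar) (Set.Iic ybar))
    (hstar_lc : LeftCont2On star (Set.Iic ybar) (Set.Iic ybar))
    (hstar_le : ∀ a ∈ Set.Iic ybar, ∀ b ∈ Set.Iic ybar, star a b ≤ min a b)
    (f g : X → ℝ≥0∞) (hf : Measurable f) (hg : Measurable g)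
    (hfy : ∀ x, f x ≤ ybar) (hgy : ∀ x, g x ≤ ybar) (r : ℝ≥0∞) :
    MeasurableSet {x | r ≤ star (f x) (g x)} := by
  rcases eq_or_lt_of_le (zero_le : (0:ℝ≥0∞) ≤ r) with hr | hr
  · have huniv : {x | r ≤ star (f x) (g x)} = Set.univ := by
      ext x; simp [← hr]
    rw [huniv]; exact MeasurableSet.univ
  · have heq : {x | r ≤ star (f x) (g x)} =
        ⋂ (q : ℚ) (_ : ((Real.toNNReal q : ℝ≥0∞)) < r),
          ⋃ (a : ℚ) (b : ℚ)
            (_ : ((Real.toNNReal q : ℝ≥0∞)) <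
              star ((Real.toNNReal a : ℝ≥0∞)) ((Real.toNNReal b : ℝ≥0∞))),
            ({x | ((Real.toNNReal a : ℝ≥0∞)) < f x} ∩
              {x | ((Real.toNNReal b : ℝ≥0∞)) < g x}) := by
      ext x
      simp only [Set.mem_setOf_eq, Set.mem_iInter, Set.mem_iUnion, Set.mem_inter_iff]
      constructor
      · intro hx q hq
        have hq' : ((Real.toNNReal q : ℝ≥0∞)) < star (f x) (g x) := hq.trans_le hx
        have hqfx : ((Real.toNNReal q : ℝ≥0∞)) < f x :=
          hq'.trans_le ((hstar_le _ (Set.mem_Iic.mpr (hfy x)) _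
            (Set.mem_Iic.mpr (hgy x))).trans (min_le_left _ _))
        have hqgx : ((Real.toNNReal q : ℝ≥0∞)) < g x :=
          hq'.trans_le ((hstar_le _ (Set.mem_Iic.mpr (hfy x)) _
            (Set.mem_Iic.mpr (hgy x))).trans (min_le_right _ _))
        have hfx0 : 0 < f x := lt_of_le_of_lt (zero_le) hqfx
        have hgx0 : 0 < g x := lt_of_le_of_lt (zero_le) hqgx
        -- first coordinate: find a < f x with q < star a (g x)
        have hne1 : (nhdsWithin (f x) (Set.Iio (f x))).NeBot :=
          nhdsWithin_Iio_self_neBot' ⟨0, hfx0⟩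
        have hc1 : Filter.Tendsto (fun a => star a (g x))
            (nhdsWithin (f x) (Set.Iio (f x))) (nhds (star (f x) (g x))) :=
          Filter.Tendsto.mono_left
            (hstar_lc.1 (g x) (Set.mem_Iic.mpr (hgy x)) (f x) (Set.mem_Iic.mpr (hfy x)))
            (nhdsWithin_mono _ Set.Iio_subset_Iic_self)
        have hev1 : (fun a => star a (g x)) ⁻¹' (Set.Ioi ((Real.toNNReal q : ℝ≥0∞))) ∈
            nhdsWithin (f x) (Set.Iio (f x)) := hc1 (Ioi_mem_nhds hq')
        obtain ⟨a, ha1, ha2⟩ :=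
          Filter.nonempty_of_mem (Filter.inter_mem hev1 self_mem_nhdsWithin)
        -- ha1 : q < star a (g x), ha2 : a < f x
        have hay : a ≤ ybar := (le_of_lt ha2).trans (hfy x)
        -- second coordinate: find b < g x with q < star a b
        have hne2 : (nhdsWithin (g x) (Set.Iio (g x))).NeBot :=
          nhdsWithin_Iio_self_neBot' ⟨0, hgx0⟩
        have hc2 : Filter.Tendsto (fun b => star a b)
            (nhdsWithin (g x) (Set.Iio (g x))) (nhds (star a (g x))) :=
          Filter.Tendsto.mono_left
            (hstar_lc.2 a (Set.mem_Iic.mpr hay) (g x) (Set.mem_Iic.mpr (hgy x)))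
            (nhdsWithin_mono _ Set.Iio_subset_Iic_self)
        have hev2 : (fun b => star a b) ⁻¹' (Set.Ioi ((Real.toNNReal q : ℝ≥0∞))) ∈
            nhdsWithin (g x) (Set.Iio (g x)) := hc2 (Ioi_mem_nhds ha1)
        obtain ⟨b, hb1, hb2⟩ :=
          Filter.nonempty_of_mem (Filter.inter_mem hev2 self_mem_nhdsWithin)
        -- hb1 : q < star a b, hb2 : b < g x
        have hby : b ≤ ybar := (le_of_lt hb2).trans (hgy x)
        -- rationalize a and b
        obtain ⟨a', _, ha'1, ha'2⟩ := ENNReal.lt_iff_exists_rat_btwn.mp ha2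
        obtain ⟨b', _, hb'1, hb'2⟩ := ENNReal.lt_iff_exists_rat_btwn.mp hb2
        refine ⟨a', b', ?_, ha'2, hb'2⟩
        have ha'y : ((Real.toNNReal a' : ℝ≥0∞)) ≤ ybar := ha'2.le.trans (hfy x)
        have hb'y : ((Real.toNNReal b' : ℝ≥0∞)) ≤ ybar := hb'2.le.trans (hgy x)
        exact hb1.trans_le (hstar_mono (Set.mem_Iic.mpr hay) (Set.mem_Iic.mpr hby)
          (Set.mem_Iic.mpr ha'y) (Set.mem_Iic.mpr hb'y) ha'1.le hb'1.le)
      · intro hx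
        by_contra hcon
        push_neg at hcon
        obtain ⟨q, _, hq1, hq2⟩ := ENNReal.lt_iff_exists_rat_btwn.mp hcon
        obtain ⟨a, b, hab, ha, hb⟩ := hx q hq2
        have hay : ((Real.toNNReal a : ℝ≥0∞)) ≤ ybar := ha.le.trans (hfy x)
        have hby : ((Real.toNNReal b : ℝ≥0∞)) ≤ ybar := hb.le.trans (hgy x)
        have hmono : star ((Real.toNNReal a : ℝ≥0∞)) ((Real.toNNReal b : ℝ≥0∞)) ≤
            star (f x) (g x) :=
          hstar_mono (Set.mem_Iic.mpr hay) (Set.mem_Iic.mpr hby)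
            (Set.mem_Iic.mpr (hfy x)) (Set.mem_Iic.mpr (hgy x)) ha.le hb.le
        exact absurd (hab.trans_le hmono) (not_lt.mpr hq1.le)
    rw [heq]
    refine MeasurableSet.iInter fun q => MeasurableSet.iInter fun _ =>
      MeasurableSet.iUnion fun a => MeasurableSet.iUnion fun b =>
        MeasurableSet.iUnion fun _ => ?_
    exact (measurableSet_lt measurable_const hf).inter (measurableSet_lt measurable_const hg)

/-- Pass to the limit from the left using left-continuity. -/
lemma left_limit_le (F : ℝ≥0∞ → ℝ≥0∞) (p C : ℝ≥0∞) (hp : 0 < p)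
    (hcont : ContinuousWithinAt F (Set.Iic p) p)
    (h : ∀ u, u < p → F u ≤ C) : F p ≤ C := by
  have hne : (nhdsWithin p (Set.Iio p)).NeBot := nhdsWithin_Iio_self_neBot' ⟨0, hp⟩
  have h1 : Filter.Tendsto F (nhdsWithin p (Set.Iio p)) (nhds (F p)) :=
    Filter.Tendsto.mono_left hcont (nhdsWithin_mono _ Set.Iio_subset_Iic_self)
  refine le_of_tendsto h1 ?_
  filter_upwards [self_mem_nhdsWithin] with u hu
  exact h u hu

theorem statement16 {X : Type*} [MeasurableSpace X]
    (ybar : ℝ≥0∞) (hybar : 0 < ybar)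
    (m : Set X → ℝ≥0∞) (hm : MonotoneMeasure m)
    (hm_min : ∀ C D : Set X, MeasurableSet C → MeasurableSet D →
      m (C ∩ D) = min (m C) (m D))
    (star : ℝ≥0∞ → ℝ≥0∞ → ℝ≥0∞)
    (hstar_maps : ∀ a ∈ Set.Iic ybar, ∀ b ∈ Set.Iic ybar, star a b ∈ Set.Iic ybar)
    (hstar_mono : Mono2On star (Set.Iic ybar) (Set.Iic ybar))
    (hstar_lc : LeftCont2On star (Set.Iic ybar) (Set.Iic ybar))
    (hstar_le : ∀ a ∈ Set.Iic ybar, ∀ b ∈ Set.Iic ybar, star a b ≤ min a b)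
    (φ₁ φ₂ φ₃ ψ₁ ψ₂ ψ₃ : ℝ≥0∞ → ℝ≥0∞)
    (hφ₁_maps : Set.MapsTo φ₁ (Set.Iic ybar) (Set.Iic ybar))
    (hφ₁_mono : StrictMonoOn φ₁ (Set.Iic ybar))
    (hφ₁_rc : RightContOn φ₁ (Set.Iic ybar))
    (hφ₂_maps : Set.MapsTo φ₂ (Set.Iic ybar) (Set.Iic ybar))
    (hφ₂_mono : StrictMonoOn φ₂ (Set.Iic ybar))
    (hφ₂_rc : RightContOn φ₂ (Set.Iic ybar))
    (hφ₃_maps : Set.MapsTo φ₃ (Set.Iic ybar) (Set.Iic ybar))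
    (hφ₃_mono : StrictMonoOn φ₃ (Set.Iic ybar))
    (hφ₃_rc : RightContOn φ₃ (Set.Iic ybar))
    (hφ_eq₂ : φ₁ ybar = φ₂ ybar) (hφ_eq₃ : φ₁ ybar = φ₃ ybar)
    (hψ₁_maps : Set.MapsTo ψ₁ (Set.Iic (φ₁ ybar)) (Set.Iic ybar))
    (hψ₁_mono : MonotoneOn ψ₁ (Set.Iic (φ₁ ybar)))
    (hψ₁_lc : LeftContOn ψ₁ (Set.Iic (φ₁ ybar)))
    (hψ₂_maps : Set.MapsTo ψ₂ (Set.Iic (φ₂ ybar)) (Set.Iic ybar))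
    (hψ₂_mono : MonotoneOn ψ₂ (Set.Iic (φ₂ ybar)))
    (hψ₂_lc : LeftContOn ψ₂ (Set.Iic (φ₂ ybar)))
    (hψ₃_maps : Set.MapsTo ψ₃ (Set.Iic (φ₃ ybar)) (Set.Iic ybar))
    (hψ₃_mono : MonotoneOn ψ₃ (Set.Iic (φ₃ ybar)))
    (hψ₃_lc : LeftContOn ψ₃ (Set.Iic (φ₃ ybar)))
    (hψ₁₂ : ∀ x ∈ Set.Iic (φ₁ ybar), ψ₂ x ≤ ψ₁ x)
    (hψ₁₃ : ∀ x ∈ Set.Iic (φ₁ ybar), ψ₃ x ≤ ψ₁ x)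
    (hψφ₂ : ∀ x ∈ Set.Iic ybar, ψ₂ (φ₂ x) ≤ x)
    (hψφ₃ : ∀ x ∈ Set.Iic ybar, ψ₃ (φ₃ x) ≤ x)
    (hψφ₁ : ∀ x ∈ Set.Iic ybar, x ≤ ψ₁ (φ₁ x))
    (A B : Set X) (hA : MeasurableSet A) (hB : MeasurableSet B)
    (f g : X → ℝ≥0∞) (hf : Measurable f) (hg : Measurable g)
    (hfy : ∀ x, f x ≤ ybar) (hgy : ∀ x, g x ≤ ybar) :
    star (ψ₂ (uSugeno ybar (fun a b => min a b) m A fun x => φ₂ (f x)))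
         (ψ₃ (uSugeno ybar (fun a b => min a b) m B fun x => φ₃ (g x)))
      ≤ ψ₁ (uSugeno ybar (fun a b => min a b) m (A ∩ B) fun x => φ₁ (star (f x) (g x))) := by
  have hm0 : m ∅ = 0 := hm.1
  have hmmono := hm.2.2
  set p := uSugeno ybar (fun a b => min a b) m A fun x => φ₂ (f x) with hp
  set q := uSugeno ybar (fun a b => min a b) m B fun x => φ₃ (g x) with hq
  set T := uSugeno ybar (fun a b => min a b) m (A ∩ B) fun x => φ₁ (star (f x) (g x)) with hT
  have hφ₁m := hφ₁_mono.monotoneOn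
  have hφ₂m := hφ₂_mono.monotoneOn
  have hφ₃m := hφ₃_mono.monotoneOn
  have hyy : ybar ∈ Set.Iic ybar := Set.mem_Iic.mpr le_rfl
  have hsfg : ∀ x, star (f x) (g x) ≤ ybar := fun x =>
    Set.mem_Iic.mp (hstar_maps _ (Set.mem_Iic.mpr (hfy x)) _ (Set.mem_Iic.mpr (hgy x)))
  have hpB : p ≤ φ₂ ybar :=
    uSugeno_min_le ybar (φ₂ ybar) m hm0 A _
      (fun x => hφ₂m (Set.mem_Iic.mpr (hfy x)) hyy (hfy x))
  have hqB : q ≤ φ₃ ybar :=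
    uSugeno_min_le ybar (φ₃ ybar) m hm0 B _
      (fun x => hφ₃m (Set.mem_Iic.mpr (hgy x)) hyy (hgy x))
  have hTB : T ≤ φ₁ ybar :=
    uSugeno_min_le ybar (φ₁ ybar) m hm0 (A ∩ B) _
      (fun x => hφ₁m (Set.mem_Iic.mpr (hsfg x)) hyy (hsfg x))
  have hpB' : p ≤ φ₁ ybar := hφ_eq₂ ▸ hpB
  have hqB' : q ≤ φ₁ ybar := hφ_eq₃ ▸ hqB
  -- Key combinatorial step for strict under-approximations.
  have key : ∀ u v, u < p → v < q → star (ψ₂ u) (ψ₃ v) ≤ ψ₁ T := by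
    intro u v hu hv
    -- extract a level t for f
    rw [hp] at hu
    simp only [uSugeno] at hu
    obtain ⟨t, ht⟩ := lt_iSup_iff.mp hu
    obtain ⟨htmem, hlt⟩ := lt_iSup_iff.mp ht
    have hut : u < t := hlt.trans_le (min_le_left _ _)
    have hum : u < m (A ∩ {x | t ≤ φ₂ (f x)}) := hlt.trans_le (min_le_right _ _)
    have htφ : t ≤ φ₂ ybar := by
      by_contra hcon
      push_neg at hcon
      have hempty : {x | t ≤ φ₂ (f x)} = ∅ := by
        ext x
        simp only [Set.mem_setOf_eq, Set.mem_empty_iff_false, iff_false, not_le]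
        exact (hφ₂m (Set.mem_Iic.mpr (hfy x)) hyy (hfy x)).trans_lt hcon
      rw [hempty, Set.inter_empty, hm0] at hum
      exact absurd hum (not_lt.mpr (zero_le : (0:ℝ≥0∞) ≤ u))
    obtain ⟨c, hcy, htc, hciff⟩ := pullback_level ybar φ₂ hφ₂m hφ₂_rc t htφ
    have hsetf : {x | t ≤ φ₂ (f x)} = {x | c ≤ f x} := by
      ext x; exact hciff (f x) (hfy x)
    rw [hsetf] at hum
    have hψ₂u : ψ₂ u ≤ c := by
      have h1 : ψ₂ u ≤ ψ₂ (φ₂ c) :=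
        hψ₂_mono (Set.mem_Iic.mpr (hut.le.trans (htc.trans (hφ₂m (Set.mem_Iic.mpr hcy) hyy hcy))))
          (Set.mem_Iic.mpr (hφ₂m (Set.mem_Iic.mpr hcy) hyy hcy)) (hut.le.trans htc)
      exact h1.trans (hψφ₂ c (Set.mem_Iic.mpr hcy))
    -- extract a level s for g
    rw [hq] at hv
    simp only [uSugeno] at hv
    obtain ⟨s, hs⟩ := lt_iSup_iff.mp hv
    obtain ⟨hsmem, hlt'⟩ := lt_iSup_iff.mp hs
    have hvs : v < s := hlt'.trans_le (min_le_left _ _)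
    have hvm : v < m (B ∩ {x | s ≤ φ₃ (g x)}) := hlt'.trans_le (min_le_right _ _)
    have hsφ : s ≤ φ₃ ybar := by
      by_contra hcon
      push_neg at hcon
      have hempty : {x | s ≤ φ₃ (g x)} = ∅ := by
        ext x
        simp only [Set.mem_setOf_eq, Set.mem_empty_iff_false, iff_false, not_le]
        exact (hφ₃m (Set.mem_Iic.mpr (hgy x)) hyy (hgy x)).trans_lt hcon
      rw [hempty, Set.inter_empty, hm0] at hvm
      exact absurd hvm (not_lt.mpr (zero_le : (0:ℝ≥0∞) ≤ v))
    obtain ⟨d, hdy, hsd, hdiff⟩ := pullback_level ybar φ₃ hφ₃m hφ₃_rc s hsφ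
    have hsetg : {x | s ≤ φ₃ (g x)} = {x | d ≤ g x} := by
      ext x; exact hdiff (g x) (hgy x)
    rw [hsetg] at hvm
    have hψ₃v : ψ₃ v ≤ d := by
      have h1 : ψ₃ v ≤ ψ₃ (φ₃ d) :=
        hψ₃_mono (Set.mem_Iic.mpr (hvs.le.trans (hsd.trans (hφ₃m (Set.mem_Iic.mpr hdy) hyy hdy))))
          (Set.mem_Iic.mpr (hφ₃m (Set.mem_Iic.mpr hdy) hyy hdy)) (hvs.le.trans hsd)
      exact h1.trans (hψφ₃ d (Set.mem_Iic.mpr hdy))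
    -- combine
    have hscd : star c d ≤ ybar :=
      Set.mem_Iic.mp (hstar_maps c (Set.mem_Iic.mpr hcy) d (Set.mem_Iic.mpr hdy))
    set τ := φ₁ (star c d) with hτdef
    have hτφ : τ ≤ φ₁ ybar := hφ₁m (Set.mem_Iic.mpr hscd) hyy hscd
    have hτy : τ ≤ ybar := hτφ.trans (Set.mem_Iic.mp (hφ₁_maps hyy))
    have hsub : (A ∩ {x | c ≤ f x}) ∩ (B ∩ {x | d ≤ g x}) ⊆
        (A ∩ B) ∩ {x | τ ≤ φ₁ (star (f x) (g x))} := by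
      rintro x ⟨⟨hxA, hxc⟩, hxB, hxd⟩
      refine ⟨⟨hxA, hxB⟩, ?_⟩
      have h1 : star c d ≤ star (f x) (g x) :=
        hstar_mono (Set.mem_Iic.mpr hcy) (Set.mem_Iic.mpr hdy)
          (Set.mem_Iic.mpr (hfy x)) (Set.mem_Iic.mpr (hgy x)) hxc hxd
      exact hφ₁m (Set.mem_Iic.mpr hscd) (Set.mem_Iic.mpr (hsfg x)) h1
    -- measurability of the τ-level set
    obtain ⟨c₁, hc₁y, htc₁, hc₁iff⟩ := pullback_level ybar φ₁ hφ₁m hφ₁_rc τ hτφ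
    have hsetτ : {x | τ ≤ φ₁ (star (f x) (g x))} = {x | c₁ ≤ star (f x) (g x)} := by
      ext x; exact hc₁iff _ (hsfg x)
    have hmeasτ : MeasurableSet {x | τ ≤ φ₁ (star (f x) (g x))} := by
      rw [hsetτ]
      exact star_level_meas ybar star hstar_mono hstar_lc hstar_le f g hf hg hfy hgy c₁
    have hmeasf : MeasurableSet (A ∩ {x | c ≤ f x}) :=
      hA.inter (measurableSet_le measurable_const hf)
    have hmeasg : MeasurableSet (B ∩ {x | d ≤ g x}) :=
      hB.inter (measurableSet_le measurable_const hg)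
    have hminuv : min u v < m ((A ∩ B) ∩ {x | τ ≤ φ₁ (star (f x) (g x))}) := by
      have h1 : m ((A ∩ {x | c ≤ f x}) ∩ (B ∩ {x | d ≤ g x})) =
          min (m (A ∩ {x | c ≤ f x})) (m (B ∩ {x | d ≤ g x})) := hm_min _ _ hmeasf hmeasg
      have h2 : min u v < min (m (A ∩ {x | c ≤ f x})) (m (B ∩ {x | d ≤ g x})) :=
        lt_min ((min_le_left u v).trans_lt hum) ((min_le_right u v).trans_lt hvm)
      calc min u v < _ := h2
        _ = _ := h1.symm
        _ ≤ _ := hmmono (hmeasf.inter hmeasg) ((hA.inter hB).inter hmeasτ) hsub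
    have hTlb : min τ (min u v) ≤ T := by
      have h1 : min τ (min u v) ≤
          min τ (m ((A ∩ B) ∩ {x | τ ≤ φ₁ (star (f x) (g x))})) :=
        min_le_min le_rfl hminuv.le
      refine h1.trans ?_
      rw [hT]
      simp only [uSugeno]
      exact le_iSup₂ (f := fun t (_ : t ∈ Set.Iic ybar) =>
        min t (m ((A ∩ B) ∩ {x | t ≤ φ₁ (star (f x) (g x))}))) τ (Set.mem_Iic.mpr hτy)
    have huφ₁ : u ≤ φ₁ ybar := hu.le.trans hpB'
    have hvφ₁ : v ≤ φ₁ ybar := hv.le.trans hqB'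
    have hψ₂u_mem : ψ₂ u ∈ Set.Iic ybar := hψ₂_maps (Set.mem_Iic.mpr (hu.le.trans hpB))
    have hψ₃v_mem : ψ₃ v ∈ Set.Iic ybar := hψ₃_maps (Set.mem_Iic.mpr (hv.le.trans hqB))
    rcases le_total τ (min u v) with hcase | hcase
    · -- τ is the min: use ψ₁(φ₁(star c d)) ≥ star c d
      have h1 : star (ψ₂ u) (ψ₃ v) ≤ star c d :=
        hstar_mono hψ₂u_mem hψ₃v_mem (Set.mem_Iic.mpr hcy) (Set.mem_Iic.mpr hdy) hψ₂u hψ₃v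
      have h2 : star c d ≤ ψ₁ τ := hψφ₁ (star c d) (Set.mem_Iic.mpr hscd)
      have hτT : τ ≤ T := by
        have := hTlb; rwa [min_eq_left hcase] at this
      have h3 : ψ₁ τ ≤ ψ₁ T :=
        hψ₁_mono (Set.mem_Iic.mpr hτφ) (Set.mem_Iic.mpr hTB) hτT
      exact h1.trans (h2.trans h3)
    · have hT' : min u v ≤ T := by
        have := hTlb; rwa [min_eq_right hcase] at this
      rcases le_total u v with huv | huv
      · have h1 : star (ψ₂ u) (ψ₃ v) ≤ ψ₂ u :=
          (hstar_le _ hψ₂u_mem _ hψ₃v_mem).trans (min_le_left _ _)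
        have h2 : ψ₂ u ≤ ψ₁ u := hψ₁₂ u (Set.mem_Iic.mpr huφ₁)
        have huT : u ≤ T := by
          have := hT'; rwa [min_eq_left huv] at this
        have h3 : ψ₁ u ≤ ψ₁ T :=
          hψ₁_mono (Set.mem_Iic.mpr huφ₁) (Set.mem_Iic.mpr hTB) huT
        exact h1.trans (h2.trans h3)
      · have h1 : star (ψ₂ u) (ψ₃ v) ≤ ψ₃ v :=
          (hstar_le _ hψ₂u_mem _ hψ₃v_mem).trans (min_le_right _ _)
        have h2 : ψ₃ v ≤ ψ₁ v := hψ₁₃ v (Set.mem_Iic.mpr hvφ₁)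
        have hvT : v ≤ T := by
          have := hT'; rwa [min_eq_right huv] at this
        have h3 : ψ₁ v ≤ ψ₁ T :=
          hψ₁_mono (Set.mem_Iic.mpr hvφ₁) (Set.mem_Iic.mpr hTB) hvT
        exact h1.trans (h2.trans h3)
  -- ψ₂ 0 = 0 and ψ₃ 0 = 0
  have hψ₂0 : ψ₂ 0 = 0 := by
    refine le_antisymm ?_ (zero_le)
    have h1 : ψ₂ 0 ≤ ψ₂ (φ₂ 0) :=
      hψ₂_mono (Set.mem_Iic.mpr (zero_le))
        (Set.mem_Iic.mpr (hφ₂m (Set.mem_Iic.mpr (zero_le)) hyy (zero_le))) (zero_le)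
    exact h1.trans (hψφ₂ 0 (Set.mem_Iic.mpr (zero_le)))
  have hψ₃0 : ψ₃ 0 = 0 := by
    refine le_antisymm ?_ (zero_le)
    have h1 : ψ₃ 0 ≤ ψ₃ (φ₃ 0) :=
      hψ₃_mono (Set.mem_Iic.mpr (zero_le))
        (Set.mem_Iic.mpr (hφ₃m (Set.mem_Iic.mpr (zero_le)) hyy (zero_le))) (zero_le)
    exact h1.trans (hψφ₃ 0 (Set.mem_Iic.mpr (zero_le)))
  have hψ₂p_mem : ψ₂ p ∈ Set.Iic ybar := hψ₂_maps (Set.mem_Iic.mpr hpB)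
  have hψ₃q_mem : ψ₃ q ∈ Set.Iic ybar := hψ₃_maps (Set.mem_Iic.mpr hqB)
  -- Stage 1: limit in the first coordinate.
  have stage1 : ∀ v, v < q → star (ψ₂ p) (ψ₃ v) ≤ ψ₁ T := by
    intro v hv
    have hψ₃v_mem : ψ₃ v ∈ Set.Iic ybar := hψ₃_maps (Set.mem_Iic.mpr (hv.le.trans hqB))
    rcases eq_or_lt_of_le (zero_le : (0:ℝ≥0∞) ≤ p) with hp0 | hp0
    · rw [← hp0, hψ₂0]
      have h1 : star 0 (ψ₃ v) ≤ min 0 (ψ₃ v) :=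
        hstar_le 0 (Set.mem_Iic.mpr (zero_le)) (ψ₃ v) hψ₃v_mem
      calc star 0 (ψ₃ v) ≤ min 0 (ψ₃ v) := h1
        _ = 0 := min_eq_left (zero_le)
        _ ≤ ψ₁ T := zero_le
    · refine left_limit_le (fun u => star (ψ₂ u) (ψ₃ v)) p (ψ₁ T) hp0 ?_
        (fun u hu => key u v hu hv)
      have hψc : ContinuousWithinAt ψ₂ (Set.Iic p) p := hψ₂_lc p (Set.mem_Iic.mpr hpB)
      have hsc : ContinuousWithinAt (fun a => star a (ψ₃ v)) (Set.Iic (ψ₂ p)) (ψ₂ p) :=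
        hstar_lc.1 (ψ₃ v) hψ₃v_mem (ψ₂ p) hψ₂p_mem
      exact hsc.comp hψc (fun u hu => Set.mem_Iic.mpr
        (hψ₂_mono (Set.mem_Iic.mpr ((Set.mem_Iic.mp hu).trans hpB))
          (Set.mem_Iic.mpr hpB) (Set.mem_Iic.mp hu)))
  -- Stage 2: limit in the second coordinate.
  rcases eq_or_lt_of_le (zero_le : (0:ℝ≥0∞) ≤ q) with hq0 | hq0
  · rw [← hq0, hψ₃0]
    have h1 : star (ψ₂ p) 0 ≤ min (ψ₂ p) 0 :=
      hstar_le (ψ₂ p) hψ₂p_mem 0 (Set.mem_Iic.mpr (zero_le))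
    calc star (ψ₂ p) 0 ≤ min (ψ₂ p) 0 := h1
      _ = 0 := min_eq_right (zero_le)
      _ ≤ ψ₁ T := zero_le
  · refine left_limit_le (fun v => star (ψ₂ p) (ψ₃ v)) q (ψ₁ T) hq0 ?_ stage1
    have hψc : ContinuousWithinAt ψ₃ (Set.Iic q) q := hψ₃_lc q (Set.mem_Iic.mpr hqB)
    have hsc : ContinuousWithinAt (fun b => star (ψ₂ p) b) (Set.Iic (ψ₃ q)) (ψ₃ q) :=
      hstar_lc.2 (ψ₂ p) hψ₂p_mem (ψ₃ q) hψ₃q_mem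
    exact hsc.comp hψc (fun v hv => Set.mem_Iic.mpr
      (hψ₃_mono (Set.mem_Iic.mpr ((Set.mem_Iic.mp hv).trans hqB))
        (Set.mem_Iic.mpr hqB) (Set.mem_Iic.mp hv)))
end

section
/- Let m be a capacity on (X,𝒜) whose dual capacity m^d, defined by m^d(C) = 1 − m(X∖C), is subadditive, i.e., m^d(C∪D) ≤ m^d(C) + m^d(D) for all C,D ∈ 𝒜. Then for all A,B ∈ 𝒜, all 𝒜-measurable f,g : X → [0,∞] and all α,β ∈ [0,∞]: m(A∩B∩{f≥α}∩{g≥β}) ≥ max( m(A∩{f≥α}) + m(B∩{g≥β}) − 1, 0 ). In particular, every such pair of restrictions f|_A, g|_B is m-positively dependent with respect to the Łukasiewicz operation W(a,b) = max(a+b−1, 0). Consequently, the same conclusion holds whenever m is a supermodular capacity (m(C∪D) + m(C∩D) ≥ m(C) + m(D) for all C,D ∈ 𝒜). -/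
open Set ENNReal

lemma key_main {X : Type*} [MeasurableSpace X]
    (m : Set X → ℝ≥0∞)
    (hkey : ∀ C D : Set X, MeasurableSet C → MeasurableSet D →
      m C + m D ≤ 1 + m (C ∩ D)) :
    (∀ A B : Set X, MeasurableSet A → MeasurableSet B →
        ∀ f g : X → ℝ≥0∞, Measurable f → Measurable g → ∀ α β : ℝ≥0∞,
          max (m (A ∩ {x | α ≤ f x}) + m (B ∩ {x | β ≤ g x}) - 1) 0
            ≤ m (A ∩ B ∩ {x | α ≤ f x} ∩ {x | β ≤ g x})) ∧
      (∀ A B : Set X, MeasurableSet A → MeasurableSet B →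
        ∀ f g : X → ℝ≥0∞, Measurable f → Measurable g →
          MPosDep m (fun a b => max (a + b - 1) 0) ⊤ A B f g) := by
  have main : ∀ A B : Set X, MeasurableSet A → MeasurableSet B →
      ∀ f g : X → ℝ≥0∞, Measurable f → Measurable g → ∀ α β : ℝ≥0∞,
        max (m (A ∩ {x | α ≤ f x}) + m (B ∩ {x | β ≤ g x}) - 1) 0
          ≤ m (A ∩ B ∩ {x | α ≤ f x} ∩ {x | β ≤ g x}) := by
    intro A B hA hB f g hf hg α β
    have hC : MeasurableSet (A ∩ {x | α ≤ f x}) :=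
      hA.inter (measurableSet_le measurable_const hf)
    have hD : MeasurableSet (B ∩ {x | β ≤ g x}) :=
      hB.inter (measurableSet_le measurable_const hg)
    have hset : (A ∩ {x | α ≤ f x}) ∩ (B ∩ {x | β ≤ g x})
        = A ∩ B ∩ {x | α ≤ f x} ∩ {x | β ≤ g x} := by
      ext x; simp only [Set.mem_inter_iff]; tauto
    have h := hkey _ _ hC hD
    rw [hset] at h
    refine max_le ?_ zero_le
    rw [tsub_le_iff_left]
    exact h
  exact ⟨main, fun A B hA hB f g hf hg α _ β _ => main A B hA hB f g hf hg α β⟩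

theorem statement17 {X : Type*} [MeasurableSpace X]
    (m : Set X → ℝ≥0∞) (hm : IsCapacity m) :
    ((∀ C D : Set X, MeasurableSet C → MeasurableSet D →
        1 - m ((C ∪ D)ᶜ) ≤ (1 - m Cᶜ) + (1 - m Dᶜ)) →
      (∀ A B : Set X, MeasurableSet A → MeasurableSet B →
        ∀ f g : X → ℝ≥0∞, Measurable f → Measurable g → ∀ α β : ℝ≥0∞,
          max (m (A ∩ {x | α ≤ f x}) + m (B ∩ {x | β ≤ g x}) - 1) 0
            ≤ m (A ∩ B ∩ {x | α ≤ f x} ∩ {x | β ≤ g x})) ∧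
      (∀ A B : Set X, MeasurableSet A → MeasurableSet B →
        ∀ f g : X → ℝ≥0∞, Measurable f → Measurable g →
          MPosDep m (fun a b => max (a + b - 1) 0) ⊤ A B f g))
    ∧
    ((∀ C D : Set X, MeasurableSet C → MeasurableSet D →
        m C + m D ≤ m (C ∪ D) + m (C ∩ D)) →
      (∀ A B : Set X, MeasurableSet A → MeasurableSet B →
        ∀ f g : X → ℝ≥0∞, Measurable f → Measurable g → ∀ α β : ℝ≥0∞,
          max (m (A ∩ {x | α ≤ f x}) + m (B ∩ {x | β ≤ g x}) - 1) 0
            ≤ m (A ∩ B ∩ {x | α ≤ f x} ∩ {x | β ≤ g x})) ∧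
      (∀ A B : Set X, MeasurableSet A → MeasurableSet B →
        ∀ f g : X → ℝ≥0∞, Measurable f → Measurable g →
          MPosDep m (fun a b => max (a + b - 1) 0) ⊤ A B f g)) := by
  constructor
  · intro h
    apply key_main
    intro C D hC hD
    have hsub := h Cᶜ Dᶜ hC.compl hD.compl
    rw [show (Cᶜ ∪ Dᶜ)ᶜ = C ∩ D by rw [Set.compl_union, compl_compl, compl_compl],
        compl_compl, compl_compl] at hsub
    have huniv : (1:ℝ≥0∞) ≤ 1 := le_refl _
    have haC : m C ≤ 1 := hm.2.2 hC MeasurableSet.univ (Set.subset_univ _) |>.trans hm.2.1.le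
    have haD : m D ≤ 1 := hm.2.2 hD MeasurableSet.univ (Set.subset_univ _) |>.trans hm.2.1.le
    -- hsub : 1 - m (C ∩ D) ≤ (1 - m C) + (1 - m D)
    have h1 : (1:ℝ≥0∞) ≤ m (C ∩ D) + ((1 - m C) + (1 - m D)) := by
      rw [← tsub_le_iff_left]; exact hsub
    have h2 : (1:ℝ≥0∞) + (m C + m D) ≤ m (C ∩ D) + ((1 - m C) + (1 - m D)) + (m C + m D) :=
      add_le_add_left h1 _
    have hcancelC : (1 - m C) + m C = 1 := tsub_add_cancel_of_le haC
    have hcancelD : (1 - m D) + m D = 1 := tsub_add_cancel_of_le haD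
    have h3 : m (C ∩ D) + ((1 - m C) + (1 - m D)) + (m C + m D)
        = (1 + 1) + m (C ∩ D) := by
      have hh : m (C ∩ D) + ((1 - m C) + (1 - m D)) + (m C + m D)
          = ((1 - m C) + m C) + ((1 - m D) + m D) + m (C ∩ D) := by ring
      rw [hh, hcancelC, hcancelD, add_comm]
    rw [h3] at h2
    rw [show (1:ℝ≥0∞) + 1 + m (C ∩ D) = 1 + (1 + m (C ∩ D)) by ring] at h2
    exact (ENNReal.add_le_add_iff_left ENNReal.one_ne_top).mp h2
  · intro h
    apply key_main
    intro C D hC hD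
    have hU : m (C ∪ D) ≤ 1 :=
      (hm.2.2 (hC.union hD) MeasurableSet.univ (Set.subset_univ _)).trans hm.2.1.le
    calc m C + m D ≤ m (C ∪ D) + m (C ∩ D) := h C D hC hD
      _ ≤ 1 + m (C ∩ D) := add_le_add_left hU _
end
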